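/- Let $p$ be an odd prime and $G$ the non-abelian group of order $p^3$ and exponent $p$. Then $G$ has exactly $p+2$ $z$-classes (equivalence classes under conjugacy of centralizers), and exactly $p^2 + p - 1$ conjugacy classes. -/

import Mathlib

/-- Two elements are `z`-equivalent if their centralizers are conjugate subgroups. -/
def zEquiv {G : Type*} [Group G] (g h : G) : Prop :=
  ∃ x : G, (Subgroup.centralizer {g}).map (MulAut.conj x).toMonoidHom
      = Subgroup.centralizer {h}


set_option linter.unusedSectionVars false

section Aux
variable {p : ℕ} {G : Type*} [Group G] [Fintype G]

lemma aux_center_card (hp : p.Prime) (hcard : Fintype.card G = p ^ 3)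
    (hna : ∃ a b : G, a * b ≠ b * a) : Nat.card (Subgroup.center G) = p := by
  haveI : Fact p.Prime := ⟨hp⟩
  have hG : Nat.card G = p ^ 3 := by rw [Nat.card_eq_fintype_card, hcard]
  obtain ⟨k, hk0, hk⟩ := IsPGroup.card_center_eq_prime_pow hG (by norm_num)
  have hmul := Subgroup.card_eq_card_quotient_mul_card_subgroup (Subgroup.center G)
  rw [hG, hk] at hmul
  have hdvd : p ^ k ∣ p ^ 3 := by
    rw [← hk, ← hG]; exact Subgroup.card_subgroup_dvd_card _
  have hkle : k ≤ 3 := (Nat.pow_dvd_pow_iff_le_right hp.one_lt).mp hdvd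
  rcases Nat.lt_or_ge k 2 with hk1 | hk2
  · have : k = 1 := by omega
    rw [hk, this, pow_one]
  · exfalso
    obtain ⟨a, b, hab⟩ := hna
    have hq : Nat.card (G ⧸ Subgroup.center G) = p ^ (3 - k) := by
      apply Nat.eq_of_mul_eq_mul_right (pow_pos hp.pos k)
      rw [← hmul, ← pow_add]
      congr 1
      omega
    have hdvd2 : Nat.card (G ⧸ Subgroup.center G) ∣ p := by
      rw [hq]
      calc p ^ (3 - k) ∣ p ^ 1 := pow_dvd_pow p (by omega)
        _ = p := pow_one p
    haveI : IsCyclic (G ⧸ Subgroup.center G) := isCyclic_of_card_dvd_prime hdvd2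
    exact hab (commutative_of_cyclic_center_quotient (QuotientGroup.mk' (Subgroup.center G))
      (by rw [QuotientGroup.ker_mk']) a b)

lemma aux_centralizer_card (hp : p.Prime) (hcard : Fintype.card G = p ^ 3)
    (hZ : Nat.card (Subgroup.center G) = p) {g : G} (hg : g ∉ Subgroup.center G) :
    Nat.card (Subgroup.centralizer ({g} : Set G)) = p ^ 2 := by
  haveI : Fact p.Prime := ⟨hp⟩
  have hG : Nat.card G = p ^ 3 := by rw [Nat.card_eq_fintype_card, hcard]
  have hgH : g ∈ Subgroup.centralizer ({g} : Set G) :=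
    Subgroup.mem_centralizer_iff.mpr (fun j hj => by rw [Set.mem_singleton_iff.mp hj])
  have hZH : Subgroup.center G ≤ Subgroup.centralizer ({g} : Set G) :=
    Subgroup.center_le_centralizer _
  have hpH : IsPGroup p (Subgroup.centralizer ({g} : Set G)) :=
    (IsPGroup.of_card hG).to_subgroup _
  obtain ⟨n, hn⟩ := IsPGroup.iff_card.mp hpH
  have hdvd : p ^ n ∣ p ^ 3 := by rw [← hn, ← hG]; exact Subgroup.card_subgroup_dvd_card _
  have hn3 : n ≤ 3 := (Nat.pow_dvd_pow_iff_le_right hp.one_lt).mp hdvd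
  have hn2 : 2 ≤ n := by
    by_contra h
    push_neg at h
    have hle : Nat.card (Subgroup.centralizer ({g} : Set G)) ≤ Nat.card (Subgroup.center G) := by
      rw [hn, hZ]
      calc p ^ n ≤ p ^ 1 := Nat.pow_le_pow_right hp.pos (by omega)
        _ = p := pow_one p
    have heq : Subgroup.center G = Subgroup.centralizer ({g} : Set G) :=
      Subgroup.eq_of_le_of_card_ge hZH hle
    exact hg (heq ▸ hgH)
  have hne3 : n ≠ 3 := by
    intro h3
    have htop : Subgroup.centralizer ({g} : Set G) = ⊤ :=
      Subgroup.eq_top_of_card_eq _ (by rw [hn, h3, hG])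
    apply hg
    rw [Subgroup.mem_center_iff]
    intro h
    have hh : h ∈ Subgroup.centralizer ({g} : Set G) := htop ▸ Subgroup.mem_top h
    exact (Subgroup.mem_centralizer_iff.mp hh g (Set.mem_singleton g)).symm
  have : n = 2 := by omega
  rw [hn, this]

lemma aux_cent_eq (hp : p.Prime) (hcard : Fintype.card G = p ^ 3)
    (hZ : Nat.card (Subgroup.center G) = p) {g h : G} (hg : g ∉ Subgroup.center G)
    (hh : h ∈ Subgroup.centralizer ({g} : Set G)) (hhc : h ∉ Subgroup.center G) :
    Subgroup.centralizer ({g} : Set G) = Subgroup.centralizer ({h} : Set G) := by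
  haveI : Fact p.Prime := ⟨hp⟩
  have hcg := aux_centralizer_card hp hcard hZ hg
  have hch := aux_centralizer_card hp hcard hZ hhc
  have hcomm := IsPGroup.commutative_of_card_eq_prime_sq (G := Subgroup.centralizer ({g} : Set G)) hcg
  have hle : Subgroup.centralizer ({g} : Set G) ≤ Subgroup.centralizer ({h} : Set G) := by
    intro x hx
    rw [Subgroup.mem_centralizer_iff]
    rintro j hj
    rw [Set.mem_singleton_iff.mp hj]
    have := hcomm ⟨h, hh⟩ ⟨x, hx⟩
    exact congrArg Subtype.val this
  exact Subgroup.eq_of_le_of_card_ge hle (by rw [hcg, hch])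

lemma aux_normal (hp : p.Prime) (hcard : Fintype.card G = p ^ 3)
    (hZ : Nat.card (Subgroup.center G) = p) {H : Subgroup G}
    (hZH : Subgroup.center G ≤ H) : H.Normal := by
  haveI : Fact p.Prime := ⟨hp⟩
  have hG : Nat.card G = p ^ 3 := by rw [Nat.card_eq_fintype_card, hcard]
  have hq : Nat.card (G ⧸ Subgroup.center G) = p ^ 2 := by
    have hmul := Subgroup.card_eq_card_quotient_mul_card_subgroup (Subgroup.center G)
    rw [hG, hZ] at hmul
    apply Nat.eq_of_mul_eq_mul_right hp.pos
    rw [← hmul]; ring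
  have hqc : ∀ a b : G ⧸ Subgroup.center G, a * b = b * a :=
    IsPGroup.commutative_of_card_eq_prime_sq hq
  constructor
  intro n hn gg
  have h1 : ((gg * n * gg⁻¹ * n⁻¹ : G) : G ⧸ Subgroup.center G) = 1 := by
    have hc := hqc (gg : G ⧸ Subgroup.center G) (n : G ⧸ Subgroup.center G)
    simp only [QuotientGroup.mk_mul, QuotientGroup.mk_inv]
    rw [hc]
    group
  have h2 : gg * n * gg⁻¹ * n⁻¹ ∈ H := hZH ((QuotientGroup.eq_one_iff _).mp h1)
  have h3 : gg * n * gg⁻¹ = (gg * n * gg⁻¹ * n⁻¹) * n := by group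
  rw [h3]; exact H.mul_mem h2 hn

lemma aux_map_conj {H : Subgroup G} (hH : H.Normal) (x : G) :
    H.map (MulAut.conj x).toMonoidHom = H := by
  ext y
  simp only [Subgroup.mem_map, MulEquiv.coe_toMonoidHom, MulAut.conj_apply]
  constructor
  · rintro ⟨h, hh, rfl⟩; exact hH.conj_mem h hh x
  · intro hy; exact ⟨x⁻¹ * y * x, by simpa using hH.conj_mem y hy x⁻¹, by group⟩

end Aux

theorem stmt_5 (p : ℕ) (hp : p.Prime) (hodd : Odd p)
    {G : Type*} [Group G] [Fintype G]
    (hcard : Fintype.card G = p ^ 3)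
    (hexp : Monoid.exponent G = p)
    (hna : ∃ a b : G, a * b ≠ b * a) :
    Set.ncard {s : Set G | ∃ g : G, s = {h : G | zEquiv g h}} = p + 2 ∧
    Nat.card (ConjClasses G) = p ^ 2 + p - 1 := by
  classical
  haveI : Fact p.Prime := ⟨hp⟩
  have hG : Nat.card G = p ^ 3 := by rw [Nat.card_eq_fintype_card, hcard]
  have hZ := aux_center_card hp hcard hna
  haveI : Finite (Subgroup G) :=
    Finite.of_injective (fun H : Subgroup G => (H : Set G)) SetLike.coe_injective
  set f : G → Subgroup G := fun g => Subgroup.centralizer {g} with hf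
  have hnorm : ∀ g : G, (f g).Normal :=
    fun g => aux_normal hp hcard hZ (Subgroup.center_le_centralizer _)
  have hzE : ∀ g h : G, zEquiv g h ↔ f g = f h := by
    intro g h
    constructor
    · rintro ⟨x, hx⟩
      rw [show Subgroup.centralizer {h} = f h from rfl] at hx
      rw [← hx, aux_map_conj (hnorm g) x]
    · intro hgh
      exact ⟨1, by rw [aux_map_conj (hnorm g) 1]; exact hgh⟩
  have hself : ∀ g : G, g ∈ f g :=
    fun g => Subgroup.mem_centralizer_iff.mpr (fun j hj => by rw [Set.mem_singleton_iff.mp hj])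
  have hclass : ∀ g : G, {h : G | zEquiv g h} = f ⁻¹' {f g} := by
    intro g
    ext h
    simp only [Set.mem_setOf_eq, Set.mem_preimage, Set.mem_singleton_iff, hzE, eq_comm]
  have hS : {s : Set G | ∃ g : G, s = {h : G | zEquiv g h}}
      = (fun C => f ⁻¹' {C}) '' Set.range f := by
    ext s
    simp only [Set.mem_setOf_eq, Set.mem_image, Set.mem_range]
    constructor
    · rintro ⟨g, rfl⟩
      exact ⟨f g, ⟨g, rfl⟩, (hclass g).symm⟩
    · rintro ⟨C, ⟨g, rfl⟩, rfl⟩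
      exact ⟨g, (hclass g).symm⟩
  have hinj : Set.InjOn (fun C => f ⁻¹' {C}) (Set.range f) := by
    rintro C₁ ⟨g₁, rfl⟩ C₂ ⟨g₂, rfl⟩ hpre
    have h1 : g₁ ∈ f ⁻¹' {f g₁} := by simp
    have h2 : g₁ ∈ f ⁻¹' {f g₂} := by
      rw [show f ⁻¹' {f g₂} = (fun C => f ⁻¹' {C}) (f g₂) from rfl, ← hpre]; exact h1
    simpa using h2
  have htop : ∀ g : G, f g = ⊤ ↔ g ∈ Subgroup.center G := by
    intro g
    rw [hf]
    simp [Subgroup.centralizer_eq_top_iff_subset, Set.singleton_subset_iff]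
  have hrange : Set.range f = insert ⊤ (f '' {g : G | g ∉ Subgroup.center G}) := by
    ext C
    simp only [Set.mem_range, Set.mem_insert_iff, Set.mem_image, Set.mem_setOf_eq]
    constructor
    · rintro ⟨g, rfl⟩
      by_cases hg : g ∈ Subgroup.center G
      · exact Or.inl ((htop g).mpr hg)
      · exact Or.inr ⟨g, hg, rfl⟩
    · rintro (rfl | ⟨g, hg, rfl⟩)
      · exact ⟨1, (htop 1).mpr (Subgroup.one_mem _)⟩
      · exact ⟨g, rfl⟩
  have hnotmem : (⊤ : Subgroup G) ∉ f '' {g : G | g ∉ Subgroup.center G} := by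
    rintro ⟨g, hg, hgt⟩
    exact hg ((htop g).mp hgt)
  -- counting the centralizers of noncentral elements
  set Nfin : Finset G := Finset.univ.filter (fun g => g ∉ Subgroup.center G) with hNfin
  have hcoe : (Nfin : Set G) = {g : G | g ∉ Subgroup.center G} := by
    ext g; simp [hNfin]
  have hZfin : (Finset.univ.filter (fun g => g ∈ Subgroup.center G)).card = p := by
    rw [← Fintype.card_subtype, ← Nat.card_eq_fintype_card]
    exact hZ
  have hNcard : Nfin.card = p ^ 3 - p := by
    have h1 : Nfin = Finset.univ \ Finset.univ.filter (fun g => g ∈ Subgroup.center G) :=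
      Finset.filter_not _ _
    rw [h1, Finset.card_sdiff_of_subset (Finset.filter_subset _ _), Finset.card_univ, hcard, hZfin]
  have himg : ∀ g ∈ Nfin, f g ∈ Nfin.image f := fun g hg => Finset.mem_image_of_mem f hg
  have hcount := Finset.card_eq_sum_card_fiberwise himg
  have hfib : ∀ C ∈ Nfin.image f, (Nfin.filter (fun g => f g = C)).card = p ^ 2 - p := by
    intro C hC
    obtain ⟨g₀, hg₀mem, rfl⟩ := Finset.mem_image.mp hC
    have hg₀ : g₀ ∉ Subgroup.center G := by
      have := Finset.mem_filter.mp hg₀mem; exact this.2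
    have hset : Nfin.filter (fun g => f g = f g₀)
        = (Finset.univ.filter (fun h => h ∈ f g₀)).filter (fun h => h ∉ Subgroup.center G) := by
      ext h
      simp only [hNfin, Finset.mem_filter, Finset.mem_univ, true_and]
      constructor
      · rintro ⟨hh, he⟩
        exact ⟨he ▸ hself h, hh⟩
      · rintro ⟨hh, hc⟩
        exact ⟨hc, (aux_cent_eq hp hcard hZ hg₀ hh hc).symm⟩
    rw [hset]
    have hcards : (Finset.univ.filter (fun h => h ∈ f g₀)).card = p ^ 2 := by
      rw [← Fintype.card_subtype, ← Nat.card_eq_fintype_card]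
      exact aux_centralizer_card hp hcard hZ hg₀
    have hsub : (Finset.univ.filter (fun h => h ∈ f g₀)).filter (fun h => h ∈ Subgroup.center G)
        = Finset.univ.filter (fun h => h ∈ Subgroup.center G) := by
      ext h
      simp only [Finset.mem_filter, Finset.mem_univ, true_and, and_iff_right_iff_imp]
      exact fun hh => Subgroup.center_le_centralizer _ hh
    have hsplit := Finset.card_filter_add_card_filter_not
      (s := Finset.univ.filter (fun h => h ∈ f g₀)) (p := fun h => h ∈ Subgroup.center G)
    rw [hsub, hZfin, hcards] at hsplit
    omega
  rw [Finset.sum_congr rfl hfib, Finset.sum_const, smul_eq_mul, hNcard] at hcount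
  have hple : p < p ^ 2 := by
    calc p = p ^ 1 := (pow_one p).symm
      _ < p ^ 2 := Nat.pow_lt_pow_right hp.one_lt (by norm_num)
  have hple3 : p < p ^ 3 := by
    calc p = p ^ 1 := (pow_one p).symm
      _ < p ^ 3 := Nat.pow_lt_pow_right hp.one_lt (by norm_num)
  have himgcard : (Nfin.image f).card = p + 1 := by
    have hkey : (p + 1) * (p ^ 2 - p) = p ^ 3 - p := by
      zify [hple.le, hple3.le]; ring
    apply Nat.eq_of_mul_eq_mul_right (show 0 < p ^ 2 - p by omega)
    rw [hkey, ← hcount]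
  have hTcard : (f '' {g : G | g ∉ Subgroup.center G}).ncard = p + 1 := by
    rw [← hcoe, ← Finset.coe_image, Set.ncard_coe_finset, himgcard]
  have hzcount : Set.ncard {s : Set G | ∃ g : G, s = {h : G | zEquiv g h}} = p + 2 := by
    rw [hS, Set.ncard_image_of_injOn hinj, hrange,
      Set.ncard_insert_of_notMem hnotmem, hTcard]
  refine ⟨hzcount, ?_⟩
  -- conjugacy class count
  have hcarrier : ∀ x ∈ ConjClasses.noncenter G, Nat.card x.carrier = p := by
    intro x hx
    obtain ⟨g, rfl⟩ := x.exists_rep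
    have hg : g ∉ Subgroup.center G := by
      intro hgc
      rw [ConjClasses.mem_noncenter] at hx
      obtain ⟨a, ha, b, hb, hab⟩ := hx
      have hone : ∀ y ∈ (ConjClasses.mk g).carrier, y = g := by
        intro y hy
        rw [ConjClasses.mem_carrier_iff_mk_eq, ConjClasses.mk_eq_mk_iff_isConj] at hy
        exact hy.eq_of_right_mem_center hgc
      exact hab ((hone a ha).trans (hone b hb).symm)
    have hstab : Nat.card (MulAction.stabilizer (ConjAct G) g) = p ^ 2 := by
      have hc := aux_centralizer_card hp hcard hZ hg
      rw [Subgroup.centralizer_eq_comap_stabilizer] at hc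
      rw [← hc]
      apply Nat.card_congr
      exact ⟨fun y => ⟨ConjAct.ofConjAct y.1, y.2⟩,
        fun x => ⟨ConjAct.toConjAct x.1, x.2⟩,
        fun y => by ext; simp, fun x => by ext; simp⟩
    have horb := MulAction.card_orbit_mul_card_stabilizer_eq_card_group (ConjAct G) g
    have horb' : Nat.card (MulAction.orbit (ConjAct G) g)
        * Nat.card (MulAction.stabilizer (ConjAct G) g) = Nat.card G := by
      simpa [Nat.card_eq_fintype_card] using horb
    rw [ConjAct.orbit_eq_carrier_conjClasses, hstab, hG] at horb'
    apply Nat.eq_of_mul_eq_mul_right (pow_pos hp.pos 2)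
    rw [horb']; ring
  have hceq := Group.nat_card_center_add_sum_card_noncenter_eq_card G
  rw [hZ, hG] at hceq
  have hsum : ∑ᶠ x ∈ ConjClasses.noncenter G, Nat.card x.carrier
      = (ConjClasses.noncenter G).ncard * p := by
    rw [finsum_mem_congr rfl hcarrier]
    rw [show ConjClasses.noncenter G = ((ConjClasses.noncenter G).toFinset : Set _) by simp]
    rw [finsum_mem_coe_finset, Finset.sum_const, smul_eq_mul]
    congr 1
    · simp [Set.ncard_eq_toFinset_card']
  rw [hsum] at hceq
  have hcompl : ((ConjClasses.noncenter G)ᶜ).ncard = p := by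
    rw [← (ConjClasses.mk_bijOn G).image_eq,
      Set.ncard_image_of_injOn (ConjClasses.mk_bijOn G).injOn,
      ← Nat.card_coe_set_eq]
    exact hZ
  have htot := Set.ncard_add_ncard_compl (ConjClasses.noncenter G)
  rw [hcompl] at htot
  -- from hceq : p + n * p = p^3, deduce n = p^2 - 1
  have hone : 1 ≤ p ^ 2 := Nat.one_le_pow _ _ hp.pos
  have hnval : (ConjClasses.noncenter G).ncard = p ^ 2 - 1 := by
    apply Nat.eq_of_mul_eq_mul_right hp.pos
    have h1 : (ConjClasses.noncenter G).ncard * p = p ^ 3 - p := by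
      rw [← hceq, Nat.add_sub_cancel_left]
    have h2 : (p ^ 2 - 1) * p = p ^ 3 - p := by
      zify [hone, hple3.le]; ring
    rw [h1, h2]
  rw [← htot, hnval]
  have := hp.pos
  omega
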